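/- Fix k ≥ 2 and define Z(q) = {a ∈ ℤ/qℤ : a is a nonzero k-th power residue and gcd(a,q) = 1}, and R_k as the product over primes p with (p−1)|k of p^{η(k,p)}. Call (q,s) a Waring pair if for every A ⊆ Z(q) with |A| > |Z(q)|/2, the s-fold sumset sA equals {a ∈ ℤ/qℤ : a ≡ s (mod gcd(R_k, q))}. If gcd(q, r) = 1 and (q, s) and (r, t) are Waring pairs, then (qr, s+t) is a Waring pair. -/
import Mathlib


open Finset

/-- `p^(tau k p)` exactly divides `k`. -/
def tau (k p : ℕ) : ℕ := k.factorization p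

def eta (k p : ℕ) : ℕ := if p = 2 ∧ 0 < tau k p then tau k p + 2 else tau k p + 1

/-- `R_k = ∏_{(p-1) ∣ k} p^(eta k p)` (all such primes satisfy `p ≤ k+1`). -/
def Rk (k : ℕ) : ℕ :=
  ∏ p ∈ (Finset.range (k + 2)).filter (fun p => p.Prime ∧ (p - 1) ∣ k), p ^ eta k p

/-- The set of `k`-th power residues mod `q` that are coprime to `q`. -/
def Zset (k q : ℕ) : Set (ZMod q) := {a | (∃ t, t ^ k = a) ∧ IsUnit a}

/-- The `s`-fold sumset of `A ⊆ ℤ/qℤ`. -/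
def sumset (q s : ℕ) (A : Set (ZMod q)) : Set (ZMod q) :=
  {x | ∃ f : Fin s → ZMod q, (∀ i, f i ∈ A) ∧ ∑ i, f i = x}

/-- `(q, s)` is a Waring pair. -/
def WaringPair (k q s : ℕ) : Prop :=
  ∀ A : Set (ZMod q), A ⊆ Zset k q → ((Zset k q).ncard : ℝ) / 2 < (A.ncard : ℝ) →
    sumset q s A =
      {a : ZMod q |
        ZMod.castHom (Nat.gcd_dvd_right (Rk k) q) (ZMod (Nat.gcd (Rk k) q)) a
          = (s : ZMod (Nat.gcd (Rk k) q))}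

lemma twoadic (t : ℤ) (ht : Odd t) : ∀ m : ℕ, (2:ℤ)^(m+3) ∣ t^(2^(m+1)) - 1 := by
  intro m
  induction m with
  | zero =>
    obtain ⟨j, hj⟩ := ht
    obtain ⟨c, hc⟩ := Int.even_mul_succ_self j
    exact ⟨c, by subst hj; norm_num; linear_combination 4 * hc⟩
  | succ n ih =>
    have hx : Odd (t ^ (2^(n+1))) := ht.pow
    obtain ⟨d, hd⟩ := hx
    have h2 : (2:ℤ) ∣ t ^ (2^(n+1)) + 1 := ⟨d + 1, by linarith⟩
    have key : t^(2^(n+1+1)) - 1 = (t^(2^(n+1)) - 1) * (t^(2^(n+1)) + 1) := by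
      rw [pow_succ, pow_mul]; ring
    rw [key, pow_succ]
    exact mul_dvd_mul ih h2

lemma pow_k_modeq (k : ℕ) (hk : 2 ≤ k) (p e n : ℕ) (hp : p.Prime)
    (hpk : (p - 1) ∣ k) (he : e ≤ eta k p) (hn : n.Coprime p) :
    n ^ k ≡ 1 [MOD p ^ e] := by
  have hk0 : k ≠ 0 := by omega
  rcases Nat.eq_zero_or_pos e with he0 | he1
  · subst he0; simp [Nat.modEq_one]
  rcases eq_or_ne p 2 with hp2 | hp2
  · -- p = 2
    subst hp2
    have hodd : Odd n := by
      rcases Nat.even_or_odd n with hev | hodd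
      · exfalso
        have : (2 : ℕ) ∣ Nat.gcd n 2 := Nat.dvd_gcd hev.two_dvd dvd_rfl
        rw [hn] at this; omega
      · exact hodd
    have hoddm : n % 2 = 1 := Nat.odd_iff.mp hodd
    rcases Nat.lt_or_ge e 2 with he2 | he2
    · -- e = 1
      interval_cases e
      have h1 : n ≡ 1 [MOD 2] := by show n % 2 = 1 % 2; omega
      simpa using h1.pow k
    · -- e ≥ 2, so tau k 2 ≥ 1
      have htau : 0 < tau k 2 := by
        by_contra h
        have h0 : tau k 2 = 0 := by omega
        simp [eta, h0] at he
        omega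
      have h2k : (2:ℕ) ∣ k := by
        calc (2:ℕ) = 2^1 := (pow_one 2).symm
        _ ∣ 2 ^ (tau k 2) := pow_dvd_pow 2 htau
        _ ∣ k := Nat.ordProj_dvd k 2
      rcases Nat.lt_or_ge e 3 with he3 | he3
      · -- e = 2
        interval_cases e
        obtain ⟨j, hj⟩ := hodd
        have hsq : n ^ 2 ≡ 1 [MOD 2^2] := by
          show n ^ 2 % 4 = 1 % 4
          have : n ^ 2 = 4 * (j * j + j) + 1 := by subst hj; ring
          omega
        obtain ⟨c, hc⟩ := h2k
        calc n ^ k = (n ^ 2) ^ c := by rw [← pow_mul, ← hc]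
        _ ≡ 1 ^ c [MOD 2^2] := hsq.pow c
        _ = 1 := one_pow c
      · -- e ≥ 3
        have hexp : (2:ℕ) ^ (e - 2) ∣ k := by
          have h1 : e - 2 ≤ tau k 2 := by
            have : eta k 2 = tau k 2 + 2 := by simp [eta, htau]
            omega
          calc (2:ℕ)^(e-2) ∣ 2 ^ (tau k 2) := pow_dvd_pow 2 h1
          _ ∣ k := Nat.ordProj_dvd k 2
        have hzz := twoadic (n : ℤ) (by exact_mod_cast hodd) (e - 3)
        have hee : e - 3 + 3 = e := by omega
        have hee2 : e - 3 + 1 = e - 2 := by omega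
        rw [hee, hee2] at hzz
        have hmod : n ^ (2 ^ (e-2)) ≡ 1 [MOD 2 ^ e] := by
          rw [Nat.modEq_iff_dvd]
          push_cast
          rw [show (1:ℤ) - (n:ℤ)^(2^(e-2)) = -((n:ℤ)^(2^(e-2)) - 1) by ring]
          exact dvd_neg.mpr hzz
        obtain ⟨c, hc⟩ := hexp
        calc n ^ k = (n ^ (2^(e-2))) ^ c := by rw [← pow_mul, ← hc]
        _ ≡ 1 ^ c [MOD 2 ^ e] := hmod.pow c
        _ = 1 := one_pow c
  · -- p odd
    have hple := hp.two_le
    have hcop : Nat.Coprime p (p-1) := by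
      rw [hp.coprime_iff_not_dvd]
      intro hdvd
      have := Nat.le_of_dvd (by omega) hdvd
      omega
    have hetap : eta k p = tau k p + 1 := by simp [eta, hp2]
    have hpe1 : p ^ (e-1) ∣ k := by
      have h1 : e - 1 ≤ tau k p := by omega
      exact dvd_trans (pow_dvd_pow p h1) (Nat.ordProj_dvd k p)
    have hphi : Nat.totient (p ^ e) = p ^ (e-1) * (p - 1) := Nat.totient_prime_pow hp he1
    have hdvd : Nat.totient (p^e) ∣ k := by
      rw [hphi]
      exact (Nat.Coprime.pow_left _ hcop).mul_dvd_of_dvd_of_dvd hpe1 hpk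
    obtain ⟨c, hc⟩ := hdvd
    have heuler := Nat.ModEq.pow_totient (hn.pow_right e)
    calc n ^ k = (n ^ Nat.totient (p^e)) ^ c := by rw [← pow_mul, ← hc]
    _ ≡ 1 ^ c [MOD p^e] := heuler.pow c
    _ = 1 := one_pow c

lemma Rk_pos (k : ℕ) : 0 < Rk k := by
  apply Finset.prod_pos
  intro p hp
  simp only [Finset.mem_filter] at hp
  exact pow_pos hp.2.1.pos _

lemma Rk_cond (k : ℕ) {p n : ℕ} (hp : p.Prime) (hn : 0 < n) (hd : p ^ n ∣ Rk k) :
    (p - 1) ∣ k ∧ n ≤ eta k p := by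
  set S := (Finset.range (k + 2)).filter (fun p => p.Prime ∧ (p - 1) ∣ k) with hS
  have hRk : Rk k ≠ 0 := (Rk_pos k).ne'
  have hfac : (Rk k).factorization p = if p ∈ S then eta k p else 0 := by
    rw [Rk, Nat.factorization_prod (fun x hx => by
      simp only [hS, Finset.mem_filter] at hx
      exact (pow_pos hx.2.1.pos _).ne')]
    rw [Finsupp.finset_sum_apply]
    have : ∀ x ∈ S, (Nat.factorization (x ^ eta k x)) p
        = if x = p then eta k p else 0 := by
      intro x hx
      simp only [hS, Finset.mem_filter] at hx
      rw [hx.2.1.factorization_pow, Finsupp.single_apply]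
      split_ifs with h
      · subst h; rfl
      · rfl
    rw [Finset.sum_congr rfl this, Finset.sum_ite_eq' S p (fun _ => eta k p)]
  have hle : n ≤ (Rk k).factorization p :=
    (Nat.Prime.pow_dvd_iff_le_factorization hp hRk).mp hd
  rw [hfac] at hle
  by_cases hmem : p ∈ S
  · simp only [hS, Finset.mem_filter] at hmem
    refine ⟨hmem.2.2, ?_⟩
    rw [if_pos] at hle
    · exact hle
    · simp only [hS, Finset.mem_filter]; exact hmem
  · simp [hmem] at hle
    omega

lemma zset_eq_one (k : ℕ) (hk : 2 ≤ k) {d : ℕ} (hd : d ∣ Rk k) :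
    ∀ a ∈ Zset k d, a = 1 := by
  rintro a ⟨⟨c, hc⟩, hunit⟩
  have hd0 : d ≠ 0 := by
    rintro rfl
    exact absurd (Nat.eq_zero_of_zero_dvd hd) (Rk_pos k).ne'
  rcases eq_or_ne d 1 with rfl | hd1
  · exact Subsingleton.elim a 1
  have : NeZero d := ⟨hd0⟩
  have hcu : IsUnit c := by
    have : IsUnit (c ^ k) := hc ▸ hunit
    exact (isUnit_pow_iff (by omega)).mp this
  obtain ⟨u, hu⟩ := hcu
  set n := c.val with hnn
  have hncop : n.Coprime d := by
    rw [hnn, ← hu]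
    exact ZMod.val_coe_unit_coprime u
  have hmain : n ^ k ≡ 1 [MOD d] := by
    rcases eq_or_ne (n ^ k) 1 with h1 | h1
    · rw [h1]
    have hn0 : n ≠ 0 := by
      rintro h0
      rw [h0] at hncop
      simp [Nat.Coprime] at hncop
      exact hd1 hncop
    have hnk0 : n ^ k ≠ 0 := pow_ne_zero _ hn0
    have hnk1 : 1 ≤ n ^ k := Nat.one_le_iff_ne_zero.mpr hnk0
    suffices hsuff : d ∣ n ^ k - 1 by
      exact ((Nat.modEq_iff_dvd' hnk1).mpr hsuff).symm
    have hsub0 : n ^ k - 1 ≠ 0 := by omega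
    rw [← Nat.factorization_le_iff_dvd hd0 hsub0]
    rw [Finsupp.le_def]
    intro p
    set e := d.factorization p with hep
    rcases Nat.eq_zero_or_pos e with he0 | he1
    · simp [← hep, he0]
    have hp : p.Prime := Nat.prime_of_mem_primeFactors (by
      rw [Nat.mem_primeFactors]
      exact ⟨by
        by_contra hnp
        rw [Nat.factorization_eq_zero_of_not_prime d hnp] at hep
        simp [hep] at he1, Nat.dvd_of_factorization_pos (by omega), hd0⟩)
    have hped : p ^ e ∣ d := Nat.ordProj_dvd d p
    have hpRk : p ^ e ∣ Rk k := hped.trans hd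
    obtain ⟨hpk1, hek⟩ := Rk_cond k hp he1 hpRk
    have hpd : p ∣ d := (dvd_pow_self p he1.ne').trans hped
    have hnp : n.Coprime p := hncop.coprime_dvd_right hpd
    have hme := (pow_k_modeq k hk p e n hp hpk1 hek hnp).symm
    rw [Nat.modEq_iff_dvd' hnk1] at hme
    exact (Nat.Prime.pow_dvd_iff_le_factorization hp hsub0).mp hme
  have hcast : ((n ^ k : ℕ) : ZMod d) = ((1:ℕ) : ZMod d) :=
    (ZMod.natCast_eq_natCast_iff _ _ _).mpr hmain
  push_cast at hcast
  rw [hnn, ZMod.natCast_val, ZMod.cast_id] at hcast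
  rw [← hc, hcast]

lemma zset_image_cast (k : ℕ) {m d : ℕ} (hdm : d ∣ m) (b : ZMod m) (hb : b ∈ Zset k m) :
    ZMod.castHom hdm (ZMod d) b ∈ Zset k d := by
  obtain ⟨⟨c, rfl⟩, hu⟩ := hb
  exact ⟨⟨ZMod.castHom hdm (ZMod d) c, (map_pow _ _ _).symm⟩, hu.map _⟩

lemma cast_zset_one (k : ℕ) (hk : 2 ≤ k) (m : ℕ) (b : ZMod m) (hb : b ∈ Zset k m) :
    ZMod.castHom (Nat.gcd_dvd_right (Rk k) m) (ZMod (Nat.gcd (Rk k) m)) b = 1 :=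
  zset_eq_one k hk (Nat.gcd_dvd_left _ _) _ (zset_image_cast k _ b hb)

lemma zset_finite (k m : ℕ) : (Zset k m).Finite := by
  have hfin : Finite (ZMod m)ˣ := by
    cases m with
    | zero => exact inferInstanceAs (Finite ℤˣ)
    | succ n => infer_instance
  apply Set.Finite.subset (Set.finite_range (fun u : (ZMod m)ˣ => (u : ZMod m)))
  rintro a ⟨_, hu⟩
  obtain ⟨u, hu'⟩ := hu
  exact ⟨u, hu'⟩

lemma prod_isUnit {M N : Type*} [Monoid M] [Monoid N] {a : M × N}
    (h1 : IsUnit a.1) (h2 : IsUnit a.2) : IsUnit a := by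
  obtain ⟨u, hu⟩ := h1
  obtain ⟨v, hv⟩ := h2
  refine ⟨⟨(↑u, ↑v), (↑u⁻¹, ↑v⁻¹), ?_, ?_⟩, ?_⟩
  · ext <;> simp
  · ext <;> simp
  · ext <;> simp [hu, hv]

lemma mem_zset_pair (k q r : ℕ) (φ : ZMod (q*r) ≃+* ZMod q × ZMod r) (b : ZMod (q*r)) :
    b ∈ Zset k (q*r) ↔ (φ b).1 ∈ Zset k q ∧ (φ b).2 ∈ Zset k r := by
  constructor
  · rintro ⟨⟨c, rfl⟩, hu⟩
    have hmap : φ (c ^ k) = ((φ c).1 ^ k, (φ c).2 ^ k) := by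
      rw [map_pow]
      exact Prod.ext (Prod.pow_fst _ _) (Prod.pow_snd _ _)
    have hu2 : IsUnit (φ (c ^ k)) := hu.map φ
    refine ⟨⟨⟨(φ c).1, ?_⟩, ?_⟩, ⟨⟨(φ c).2, ?_⟩, ?_⟩⟩
    · rw [hmap]
    · exact hu2.map (MonoidHom.fst _ _)
    · rw [hmap]
    · exact hu2.map (MonoidHom.snd _ _)
  · rintro ⟨⟨⟨x, hx⟩, hux⟩, ⟨⟨y, hy⟩, huy⟩⟩
    constructor
    · refine ⟨φ.symm (x, y), ?_⟩
      apply φ.injective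
      rw [map_pow, RingEquiv.apply_symm_apply]
      exact Prod.ext (by rw [Prod.pow_fst]; exact hx) (by rw [Prod.pow_snd]; exact hy)
    · have hub : IsUnit (φ b) := prod_isUnit hux huy
      have h2 := hub.map φ.symm
      rwa [RingEquiv.symm_apply_apply] at h2

lemma exists_fiber {γ β : Type*} [DecidableEq β] (n : ℕ) (Yf : Finset β) (Bf : Finset γ)
    (f : γ → β) (hf : ∀ b ∈ Bf, f b ∈ Yf) (h : n * Yf.card < 2 * Bf.card) :
    ∃ y₀ ∈ Yf, n < 2 * (Bf.filter (fun b => f b = y₀)).card := by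
  by_contra hcon
  push_neg at hcon
  have hsum := Finset.card_eq_sum_card_fiberwise hf
  have hle : 2 * Bf.card ≤ n * Yf.card := by
    rw [hsum, Finset.mul_sum]
    calc ∑ y ∈ Yf, 2 * (Bf.filter (fun b => f b = y)).card ≤ ∑ _y ∈ Yf, n :=
      Finset.sum_le_sum (fun y hy => hcon y hy)
    _ = n * Yf.card := by rw [Finset.sum_const, smul_eq_mul, mul_comm]
  omega

theorem stmt3 (k : ℕ) (hk : 2 ≤ k) (q r s t : ℕ) (hqr : Nat.Coprime q r)
    (h1 : WaringPair k q s) (h2 : WaringPair k r t) :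
    WaringPair k (q * r) (s + t) := by
  classical
  intro A hA hAcard
  set φ := ZMod.chineseRemainder hqr with hφdef
  have hmem : ∀ b : ZMod (q*r), b ∈ Zset k (q*r) ↔ (φ b).1 ∈ Zset k q ∧ (φ b).2 ∈ Zset k r :=
    mem_zset_pair k q r φ
  have hX : (Zset k q).Finite := zset_finite k q
  have hY : (Zset k r).Finite := zset_finite k r
  have hZ : (Zset k (q*r)).Finite := zset_finite k (q*r)
  have hAfin : A.Finite := hZ.subset hA
  have hBfin : (φ '' A).Finite := hAfin.image φ
  have hBsub : ∀ ab ∈ hBfin.toFinset, ab ∈ hX.toFinset ×ˢ hY.toFinset := by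
    intro ab hab
    rw [Set.Finite.mem_toFinset] at hab
    obtain ⟨b, hbA, hbab⟩ := hab
    have hb := (hmem b).mp (hA hbA)
    rw [Finset.mem_product, ← hbab]
    exact ⟨hX.mem_toFinset.mpr hb.1, hY.mem_toFinset.mpr hb.2⟩
  have hBcard : hBfin.toFinset.card = A.ncard := by
    rw [← Set.ncard_eq_toFinset_card _ hBfin]
    exact Set.ncard_image_of_injective A φ.injective
  have himg : φ '' (Zset k (q*r)) = (Zset k q) ×ˢ (Zset k r) := by
    ext xy
    constructor
    · rintro ⟨b, hb, hb2⟩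
      have hb3 := (hmem b).mp hb
      rw [hb2] at hb3
      exact hb3
    · rintro ⟨hx, hy⟩
      refine ⟨φ.symm xy, (hmem _).mpr ?_, RingEquiv.apply_symm_apply φ xy⟩
      rw [RingEquiv.apply_symm_apply]
      exact ⟨hx, hy⟩
  have hZcard : (Zset k (q*r)).ncard = hX.toFinset.card * hY.toFinset.card := by
    rw [← Set.ncard_image_of_injective _ φ.injective, himg,
      Set.ncard_eq_toFinset_card _ (hX.prod hY), ← Set.Finite.toFinset_prod,
      Finset.card_product]
  have hineq : hX.toFinset.card * hY.toFinset.card < 2 * hBfin.toFinset.card := by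
    have h2' : ((Zset k (q*r)).ncard : ℝ) < 2 * (A.ncard : ℝ) := by linarith
    rw [hZcard] at h2'
    rw [hBcard]
    exact_mod_cast h2'
  obtain ⟨y₀, hy₀Y, hy₀⟩ := exists_fiber hX.toFinset.card hY.toFinset hBfin.toFinset Prod.snd
      (fun b hb => (Finset.mem_product.mp (hBsub b hb)).2) hineq
  obtain ⟨x₀, hx₀X, hx₀⟩ := exists_fiber hY.toFinset.card hX.toFinset hBfin.toFinset Prod.fst
      (fun b hb => (Finset.mem_product.mp (hBsub b hb)).1)
      (by rw [mul_comm hY.toFinset.card hX.toFinset.card]; exact hineq)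
  have hx₀Z : x₀ ∈ Zset k q := hX.mem_toFinset.mp hx₀X
  have hy₀Z : y₀ ∈ Zset k r := hY.mem_toFinset.mp hy₀Y
  set A₁ : Set (ZMod q) := {x | (x, y₀) ∈ φ '' A} with hA₁def
  set A₂ : Set (ZMod r) := {y | (x₀, y) ∈ φ '' A} with hA₂def
  have hA₁sub : A₁ ⊆ Zset k q := by
    rintro x ⟨b, hbA, hb⟩
    have hb3 := (hmem b).mp (hA hbA)
    rw [hb] at hb3
    exact hb3.1
  have hA₂sub : A₂ ⊆ Zset k r := by
    rintro y ⟨b, hbA, hb⟩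
    have hb3 := (hmem b).mp (hA hbA)
    rw [hb] at hb3
    exact hb3.2
  have hA₁card : A₁.ncard = (hBfin.toFinset.filter (fun b => b.2 = y₀)).card := by
    have himg1 : (fun x => (x, y₀)) '' A₁ = ↑(hBfin.toFinset.filter (fun b => b.2 = y₀)) := by
      ext xy
      constructor
      · rintro ⟨x, hx, rfl⟩
        rw [Finset.coe_filter, Set.mem_setOf_eq, Set.Finite.mem_toFinset]
        exact ⟨hx, rfl⟩
      · intro hxy
        rw [Finset.coe_filter, Set.mem_setOf_eq, Set.Finite.mem_toFinset] at hxy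
        refine ⟨xy.1, ?_, ?_⟩
        · show (xy.1, y₀) ∈ φ '' A
          rw [← hxy.2]
          simpa using hxy.1
        · rw [← hxy.2]
    calc A₁.ncard = ((fun x => (x, y₀)) '' A₁).ncard :=
        (Set.ncard_image_of_injective _ (fun a b h => congrArg Prod.fst h)).symm
    _ = _ := by rw [himg1, Set.ncard_coe_finset]
  have hA₂card : A₂.ncard = (hBfin.toFinset.filter (fun b => b.1 = x₀)).card := by
    have himg2 : (fun y => ((x₀ : ZMod q), y)) '' A₂
        = ↑(hBfin.toFinset.filter (fun b => b.1 = x₀)) := by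
      ext xy
      constructor
      · rintro ⟨y, hy, rfl⟩
        rw [Finset.coe_filter, Set.mem_setOf_eq, Set.Finite.mem_toFinset]
        exact ⟨hy, rfl⟩
      · intro hxy
        rw [Finset.coe_filter, Set.mem_setOf_eq, Set.Finite.mem_toFinset] at hxy
        refine ⟨xy.2, ?_, ?_⟩
        · show (x₀, xy.2) ∈ φ '' A
          rw [← hxy.2]
          simpa using hxy.1
        · rw [← hxy.2]
    calc A₂.ncard = ((fun y => ((x₀ : ZMod q), y)) '' A₂).ncard :=
        (Set.ncard_image_of_injective _ (fun a b h => congrArg Prod.snd h)).symm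
    _ = _ := by rw [himg2, Set.ncard_coe_finset]
  have hA₁R : ((Zset k q).ncard : ℝ) / 2 < (A₁.ncard : ℝ) := by
    rw [div_lt_iff₀ (by norm_num : (0:ℝ) < 2)]
    have hnat : hX.toFinset.card < A₁.ncard * 2 := by rw [hA₁card]; omega
    rw [Set.ncard_eq_toFinset_card _ hX]
    exact_mod_cast hnat
  have hA₂R : ((Zset k r).ncard : ℝ) / 2 < (A₂.ncard : ℝ) := by
    rw [div_lt_iff₀ (by norm_num : (0:ℝ) < 2)]
    have hnat : hY.toFinset.card < A₂.ncard * 2 := by rw [hA₂card]; omega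
    rw [Set.ncard_eq_toFinset_card _ hY]
    exact_mod_cast hnat
  have hsum1 := h1 A₁ hA₁sub hA₁R
  have hsum2 := h2 A₂ hA₂sub hA₂R
  have hψA : ∀ b ∈ A, ZMod.castHom (Nat.gcd_dvd_right (Rk k) (q*r))
      (ZMod (Nat.gcd (Rk k) (q*r))) b = 1 :=
    fun b hb => cast_zset_one k hk (q*r) b (hA hb)
  have hx₀1 : ZMod.castHom (Nat.gcd_dvd_right (Rk k) q) (ZMod (Nat.gcd (Rk k) q)) x₀ = 1 :=
    cast_zset_one k hk q x₀ hx₀Z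
  have hy₀1 : ZMod.castHom (Nat.gcd_dvd_right (Rk k) r) (ZMod (Nat.gcd (Rk k) r)) y₀ = 1 :=
    cast_zset_one k hk r y₀ hy₀Z
  ext a
  constructor
  · rintro ⟨f, hf, rfl⟩
    show ZMod.castHom _ _ (∑ i, f i) = _
    rw [map_sum, Finset.sum_congr rfl (fun i _ => hψA (f i) (hf i))]
    simp
  · intro ha
    have ha' : ZMod.castHom (Nat.gcd_dvd_right (Rk k) (q*r)) (ZMod (Nat.gcd (Rk k) (q*r))) a
        = ((s + t : ℕ) : ZMod (Nat.gcd (Rk k) (q*r))) := ha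
    have hdqg : Nat.gcd (Rk k) q ∣ Nat.gcd (Rk k) (q*r) :=
      Nat.dvd_gcd (Nat.gcd_dvd_left _ _) ((Nat.gcd_dvd_right _ _).trans (Dvd.intro r rfl))
    have hdrg : Nat.gcd (Rk k) r ∣ Nat.gcd (Rk k) (q*r) :=
      Nat.dvd_gcd (Nat.gcd_dvd_left _ _) ((Nat.gcd_dvd_right _ _).trans (Dvd.intro_left q rfl))
    have hu : ZMod.castHom (Nat.gcd_dvd_right (Rk k) q) (ZMod (Nat.gcd (Rk k) q)) (φ a).1
        = ((s + t : ℕ) : ZMod (Nat.gcd (Rk k) q)) := by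
      have hFG := RingHom.ext_zmod
        ((ZMod.castHom (Nat.gcd_dvd_right (Rk k) q) (ZMod (Nat.gcd (Rk k) q))).comp
          ((RingHom.fst (ZMod q) (ZMod r)).comp (φ : ZMod (q*r) →+* ZMod q × ZMod r)))
        ((ZMod.castHom hdqg (ZMod (Nat.gcd (Rk k) q))).comp
          (ZMod.castHom (Nat.gcd_dvd_right (Rk k) (q*r)) (ZMod (Nat.gcd (Rk k) (q*r)))))
      have h3 := RingHom.congr_fun hFG a
      simp only [RingHom.comp_apply, RingHom.coe_fst, RingEquiv.coe_toRingHom] at h3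
      rw [h3, ha', map_natCast]
    have hv : ZMod.castHom (Nat.gcd_dvd_right (Rk k) r) (ZMod (Nat.gcd (Rk k) r)) (φ a).2
        = ((s + t : ℕ) : ZMod (Nat.gcd (Rk k) r)) := by
      have hFG := RingHom.ext_zmod
        ((ZMod.castHom (Nat.gcd_dvd_right (Rk k) r) (ZMod (Nat.gcd (Rk k) r))).comp
          ((RingHom.snd (ZMod q) (ZMod r)).comp (φ : ZMod (q*r) →+* ZMod q × ZMod r)))
        ((ZMod.castHom hdrg (ZMod (Nat.gcd (Rk k) r))).comp
          (ZMod.castHom (Nat.gcd_dvd_right (Rk k) (q*r)) (ZMod (Nat.gcd (Rk k) (q*r)))))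
      have h3 := RingHom.congr_fun hFG a
      simp only [RingHom.comp_apply, RingHom.coe_snd, RingEquiv.coe_toRingHom] at h3
      rw [h3, ha', map_natCast]
    obtain ⟨f₁, hf₁, hf₁sum⟩ : ((φ a).1 - t • x₀) ∈ sumset q s A₁ := by
      rw [hsum1]
      show ZMod.castHom _ _ _ = _
      rw [map_sub, map_nsmul, hu, hx₀1, nsmul_eq_mul, mul_one]
      push_cast
      ring
    obtain ⟨f₂, hf₂, hf₂sum⟩ : ((φ a).2 - s • y₀) ∈ sumset r t A₂ := by
      rw [hsum2]
      show ZMod.castHom _ _ _ = _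
      rw [map_sub, map_nsmul, hv, hy₀1, nsmul_eq_mul, mul_one]
      push_cast
      ring
    refine ⟨Fin.addCases (fun i => φ.symm (f₁ i, y₀)) (fun j => φ.symm (x₀, f₂ j)), ?_, ?_⟩
    · intro i
      refine Fin.addCases (motive := fun i =>
        Fin.addCases (fun i => φ.symm (f₁ i, y₀)) (fun j => φ.symm (x₀, f₂ j)) i ∈ A) ?_ ?_ i
      · intro i'
        rw [Fin.addCases_left]
        obtain ⟨b, hbA, hb⟩ := hf₁ i'
        rw [← hb, RingEquiv.symm_apply_apply]
        exact hbA
      · intro j'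
        rw [Fin.addCases_right]
        obtain ⟨b, hbA, hb⟩ := hf₂ j'
        rw [← hb, RingEquiv.symm_apply_apply]
        exact hbA
    · apply φ.injective
      rw [map_sum, Fin.sum_univ_add]
      simp only [Fin.addCases_left, Fin.addCases_right, RingEquiv.apply_symm_apply]
      have h1s : (∑ i : Fin s, ((f₁ i, y₀) : ZMod q × ZMod r))
          = (∑ i, f₁ i, s • y₀) := by
        refine Prod.ext ?_ ?_
        · rw [Prod.fst_sum]
        · rw [Prod.snd_sum]
          simp
      have h2s : (∑ j : Fin t, ((x₀, f₂ j) : ZMod q × ZMod r))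
          = (t • x₀, ∑ j, f₂ j) := by
        refine Prod.ext ?_ ?_
        · rw [Prod.fst_sum]
          simp
        · rw [Prod.snd_sum]
      rw [h1s, h2s, hf₁sum, hf₂sum, Prod.mk_add_mk]
      refine Prod.ext ?_ ?_ <;> simp
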